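/- Let Δ = 3 and let Π̂ be a node-edge-checkable problem that is a fixed point (Q(Π̂) = Π̂) and a relaxation of the sinkless-and-sourceless orientation problem Π. Then there exist labels a, d, e ∈ Σ_Π̂ such that {a,d,e} ∈ N_Π̂ and all of the 2-multisets {d,d}, {d,e}, {e,e}, {a,e}, {a,d} belong to E_Π̂. Consequently, Π̂ can be solved in zero rounds given any sinkless orientation of the input graph. -/
import Mathlib


set_option autoImplicit false

/-- A node-edge-checkable problem with (node) degree `Δ`: a set of node
configurations (cardinality-`Δ` multisets of labels) and a set of edge
configurations (cardinality-`2` multisets of labels). -/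
structure NEProblem (Δ : ℕ) (Λ : Type) where
  nodeC : Set (Multiset Λ)
  edgeC : Set (Multiset Λ)
  node_card : ∀ m ∈ nodeC, Multiset.card m = Δ
  edge_card : ∀ m ∈ edgeC, Multiset.card m = 2

/-- Nonempty subsets of `Λ`: the labels of `R*(P)`, `R(P)`, `R̄(P)`. -/
abbrev SubS (Λ : Type) : Type := {S : Set Λ // S.Nonempty}

variable {Δ : ℕ} {Λ Λ' Λ'' ΛP ΛI ΛF : Type}

/-- `f` is a port-local relaxation function from `P` to `P'`. -/
def IsPortLocalRelax (P : NEProblem Δ Λ) (P' : NEProblem Δ Λ') (f : Λ → Λ') : Prop :=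
  (∀ m ∈ P.nodeC, m.map f ∈ P'.nodeC) ∧ (∀ m ∈ P.edgeC, m.map f ∈ P'.edgeC)

/-- An occurrence-based relaxation witness from `P` to `P'`: for each node
configuration `C` of `P`, `p C` is a multiset of pairs matching each occurrence
of a label in `C` with its image label, such that node configurations are mapped
into node configurations of `P'`, and any two occurrences forming an edge
configuration of `P` are mapped to an edge configuration of `P'`. -/
def IsRelaxWitness (P : NEProblem Δ Λ) (P' : NEProblem Δ Λ')
    (p : Multiset Λ → Multiset (Λ × Λ')) : Prop :=
  (∀ C ∈ P.nodeC, (p C).map Prod.fst = C) ∧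
  (∀ C ∈ P.nodeC, (p C).map Prod.snd ∈ P'.nodeC) ∧
  (∀ C ∈ P.nodeC, ∀ C' ∈ P.nodeC, ∀ q ∈ p C, ∀ q' ∈ p C',
    ({q.1, q'.1} : Multiset Λ) ∈ P.edgeC → ({q.2, q'.2} : Multiset Λ') ∈ P'.edgeC)

/-- `P →0 P'` : `P'` is a relaxation of `P` (occurrence-based sense). -/
def Relaxes (P : NEProblem Δ Λ) (P' : NEProblem Δ Λ') : Prop :=
  ∃ p, IsRelaxWitness P P' p

/-- An edge-based relaxation witness from `P` to `P'` (dual of `IsRelaxWitness`). -/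
def IsEdgeRelaxWitness (P : NEProblem Δ Λ) (P' : NEProblem Δ Λ')
    (p : Multiset Λ → Multiset (Λ × Λ')) : Prop :=
  (∀ C ∈ P.edgeC, (p C).map Prod.fst = C) ∧
  (∀ C ∈ P.edgeC, (p C).map Prod.snd ∈ P'.edgeC) ∧
  (∀ s : Multiset (Λ × Λ'), (∀ q ∈ s, ∃ C ∈ P.edgeC, q ∈ p C) →
    s.map Prod.fst ∈ P.nodeC → s.map Prod.snd ∈ P'.nodeC)

/-- `P'` is an edge-based relaxation of `P`. -/
def EdgeRelaxes (P : NEProblem Δ Λ) (P' : NEProblem Δ Λ') : Prop :=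
  ∃ p, IsEdgeRelaxWitness P P' p

/-- The problem `R*(P)`: labels are nonempty subsets of the labels of `P`;
a node configuration is any `Δ`-multiset of sets admitting a selection forming
a node configuration of `P`; an edge configuration is any pair of sets all of
whose selections form edge configurations of `P`. -/
def RStar (P : NEProblem Δ Λ) : NEProblem Δ (SubS Λ) where
  nodeC := {m | Multiset.card m = Δ ∧ ∃ p : Multiset (SubS Λ × Λ),
    p.map Prod.fst = m ∧ (∀ q ∈ p, q.2 ∈ q.1.val) ∧ p.map Prod.snd ∈ P.nodeC}
  edgeC := {m | ∃ S₁ S₂ : SubS Λ, m = {S₁, S₂} ∧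
    ∀ L₁ ∈ S₁.val, ∀ L₂ ∈ S₂.val, ({L₁, L₂} : Multiset Λ) ∈ P.edgeC}
  node_card := fun _ hm => hm.1
  edge_card := by rintro m ⟨S₁, S₂, rfl, -⟩; rfl

/-- The product `P × P'` of two node-edge-checkable problems. -/
def prodP (P : NEProblem Δ Λ) (P' : NEProblem Δ Λ') : NEProblem Δ (Λ × Λ') where
  nodeC := {m | m.map Prod.fst ∈ P.nodeC ∧ m.map Prod.snd ∈ P'.nodeC}
  edgeC := {m | m.map Prod.fst ∈ P.edgeC ∧ m.map Prod.snd ∈ P'.edgeC}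
  node_card := fun m hm => by have := P.node_card _ hm.1; simpa using this
  edge_card := fun m hm => by have := P.edge_card _ hm.1; simpa using this

/-- The tripotent input `τ_P(Pi)`: labels are functions from the labels of `Pi`
to the labels of `R*(P)`; a multiset of functions is a node (resp. edge)
configuration iff applying it (in any matching) to every node (resp. edge)
configuration of `Pi` yields a node (resp. edge) configuration of `R*(P)`. -/
def tau (P : NEProblem Δ ΛP) (Pi : NEProblem Δ Λ) : NEProblem Δ (Λ → SubS ΛP) where
  nodeC := {m | Multiset.card m = Δ ∧ ∀ C ∈ Pi.nodeC,
    ∀ p : Multiset ((Λ → SubS ΛP) × Λ), p.map Prod.fst = m → p.map Prod.snd = C →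
      p.map (fun q => q.1 q.2) ∈ (RStar P).nodeC}
  edgeC := {m | Multiset.card m = 2 ∧ ∀ C ∈ Pi.edgeC,
    ∀ p : Multiset ((Λ → SubS ΛP) × Λ), p.map Prod.fst = m → p.map Prod.snd = C →
      p.map (fun q => q.1 q.2) ∈ (RStar P).edgeC}
  node_card := fun _ hm => hm.1
  edge_card := fun _ hm => hm.1

/-- A pair `{S₁, S₂}` of nonempty sets of labels satisfies the universal
quantifier w.r.t. the edge constraint of `P`. -/
def univEdge (P : NEProblem Δ Λ) (m : Multiset (SubS Λ)) : Prop :=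
  ∃ S₁ S₂ : SubS Λ, m = {S₁, S₂} ∧
    ∀ L₁ ∈ S₁.val, ∀ L₂ ∈ S₂.val, ({L₁, L₂} : Multiset Λ) ∈ P.edgeC

/-- A `Δ`-multiset of nonempty sets of labels satisfies the universal quantifier
w.r.t. the node constraint of `P`. -/
def univNode (P : NEProblem Δ Λ) (m : Multiset (SubS Λ)) : Prop :=
  Multiset.card m = Δ ∧ ∀ p : Multiset (SubS Λ × Λ),
    p.map Prod.fst = m → (∀ q ∈ p, q.2 ∈ q.1.val) → p.map Prod.snd ∈ P.nodeC

/-- `m'` strictly dominates `m` (coordinatewise inclusion up to permutation,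
strict in at least one coordinate). -/
def strictlyDominates (m' m : Multiset (SubS Λ)) : Prop :=
  ∃ p : Multiset (SubS Λ × SubS Λ), p.map Prod.fst = m' ∧ p.map Prod.snd = m ∧
    (∀ q ∈ p, q.2.val ⊆ q.1.val) ∧ ∃ q ∈ p, q.2.val ⊂ q.1.val

/-- The edge constraint of `R(P)`: maximal universally-satisfying pairs. -/
def REedge (P : NEProblem Δ Λ) : Set (Multiset (SubS Λ)) :=
  {m | univEdge P m ∧ ∀ m', univEdge P m' → ¬ strictlyDominates m' m}

/-- The problem `R(P)`. -/
def RE (P : NEProblem Δ Λ) : NEProblem Δ (SubS Λ) where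
  nodeC := {m | Multiset.card m = Δ ∧ (∀ S ∈ m, ∃ e ∈ REedge P, S ∈ e) ∧
    ∃ p : Multiset (SubS Λ × Λ), p.map Prod.fst = m ∧ (∀ q ∈ p, q.2 ∈ q.1.val) ∧
      p.map Prod.snd ∈ P.nodeC}
  edgeC := REedge P
  node_card := fun _ hm => hm.1
  edge_card := by rintro m ⟨⟨S₁, S₂, rfl, -⟩, -⟩; rfl

/-- The node constraint of `R̄(P)`: maximal universally-satisfying `Δ`-multisets. -/
def REbarNode (P : NEProblem Δ Λ) : Set (Multiset (SubS Λ)) :=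
  {m | univNode P m ∧ ∀ m', univNode P m' → ¬ strictlyDominates m' m}

/-- The problem `R̄(P)` (dual of `R(P)`). -/
def REbar (P : NEProblem Δ Λ) : NEProblem Δ (SubS Λ) where
  nodeC := REbarNode P
  edgeC := {m | ∃ S₁ S₂ : SubS Λ, m = {S₁, S₂} ∧
    (∃ e ∈ REbarNode P, S₁ ∈ e) ∧ (∃ e ∈ REbarNode P, S₂ ∈ e) ∧
    ∃ L₁ ∈ S₁.val, ∃ L₂ ∈ S₂.val, ({L₁, L₂} : Multiset Λ) ∈ P.edgeC}
  node_card := fun _ hm => hm.1.1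
  edge_card := by rintro m ⟨S₁, S₂, rfl, -⟩; rfl

/-- One step of round elimination: `Q = R̄ ∘ R`. -/
def Qop (P : NEProblem Δ Λ) : NEProblem Δ (SubS (SubS Λ)) := REbar (RE P)

/-- Label type of `Q^i(P)`. -/
def QIterType (Λ : Type) : ℕ → Type
  | 0 => Λ
  | i + 1 => SubS (SubS (QIterType Λ i))

/-- `Q^i(P)`. -/
def QIter (P : NEProblem Δ Λ) : (i : ℕ) → NEProblem Δ (QIterType Λ i)
  | 0 => P
  | i + 1 => Qop (QIter P i)

/-- Labels of `P` occurring in some configuration of `P`. -/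
def usedLabels (P : NEProblem Δ Λ) : Set Λ :=
  {L | (∃ C ∈ P.nodeC, L ∈ C) ∨ (∃ C ∈ P.edgeC, L ∈ C)}

/-- `P'` arises from `P` by a bijective renaming of (used) labels. -/
def EquivUpToRenaming (P : NEProblem Δ Λ) (P' : NEProblem Δ Λ') : Prop :=
  ∃ f : Λ → Λ', Set.InjOn f (usedLabels P) ∧
    P'.nodeC = (fun m => m.map f) '' P.nodeC ∧
    P'.edgeC = (fun m => m.map f) '' P.edgeC

/-- The trivial one-label problem. -/
def trivProblem (Δ : ℕ) : NEProblem Δ Unit where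
  nodeC := {Multiset.replicate Δ ()}
  edgeC := {Multiset.replicate 2 ()}
  node_card := by intro m hm; rw [Set.mem_singleton_iff] at hm; subst hm; simp
  edge_card := by intro m hm; rw [Set.mem_singleton_iff] at hm; subst hm; simp

/-- Labels of the sinkless-and-sourceless orientation problem. -/
inductive SSOLabel : Type
  | B | C
deriving DecidableEq

/-- The sinkless-and-sourceless orientation problem (Δ = 3). -/
def SSO : NEProblem 3 SSOLabel where
  nodeC := {m | Multiset.card m = 3 ∧ SSOLabel.B ∈ m ∧ SSOLabel.C ∈ m}
  edgeC := {({SSOLabel.B, SSOLabel.C} : Multiset SSOLabel)}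
  node_card := fun _ h => h.1
  edge_card := by intro m hm; rw [Set.mem_singleton_iff] at hm; subst hm; rfl

/-! ### Auxiliary machinery for the proof of Statement 16 -/

section AuxMultiset
variable {α β γ : Type*}

lemma pair_comm' (x y : α) : ({x, y} : Multiset α) = {y, x} :=
  Multiset.cons_swap x y 0

lemma triple_swap12 (x y z : α) : ({x, y, z} : Multiset α) = {y, x, z} :=
  Multiset.cons_swap x y {z}

lemma triple_swap23 (x y z : α) : ({x, y, z} : Multiset α) = {x, z, y} :=
  congrArg (x ::ₘ ·) (Multiset.cons_swap y z 0)

lemma triple_rot (x y z : α) : ({x, y, z} : Multiset α) = {z, x, y} := by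
  rw [triple_swap23, triple_swap12]

lemma map_fst_cons_decomp {s : Multiset (α × β)} {a : α} {t : Multiset α}
    (h : s.map Prod.fst = a ::ₘ t) :
    ∃ b s', s = (a, b) ::ₘ s' ∧ s'.map Prod.fst = t := by
  have ha : a ∈ s.map Prod.fst := h ▸ Multiset.mem_cons_self a t
  rcases Multiset.mem_map.1 ha with ⟨q, hq, hq1⟩
  rcases Multiset.exists_cons_of_mem hq with ⟨s', rfl⟩
  refine ⟨q.2, s', ?_, ?_⟩
  · rw [← hq1]
  · rw [Multiset.map_cons, hq1] at h
    exact (Multiset.cons_inj_right a).mp h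

lemma map_snd_cons_decomp {s : Multiset (α × β)} {b : β} {t : Multiset β}
    (h : s.map Prod.snd = b ::ₘ t) :
    ∃ a s', s = (a, b) ::ₘ s' ∧ s'.map Prod.snd = t := by
  have hb : b ∈ s.map Prod.snd := h ▸ Multiset.mem_cons_self b t
  rcases Multiset.mem_map.1 hb with ⟨q, hq, hq1⟩
  rcases Multiset.exists_cons_of_mem hq with ⟨s', rfl⟩
  refine ⟨q.1, s', ?_, ?_⟩
  · rw [← hq1]
  · rw [Multiset.map_cons, hq1] at h
    exact (Multiset.cons_inj_right b).mp h

lemma map_fst_triple_decomp {s : Multiset (α × β)} {x y z : α}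
    (h : s.map Prod.fst = {x, y, z}) :
    ∃ x' y' z', s = {(x, x'), (y, y'), (z, z')} := by
  rcases map_fst_cons_decomp h with ⟨x', s1, rfl, h1⟩
  rcases map_fst_cons_decomp h1 with ⟨y', s2, rfl, h2⟩
  rcases map_fst_cons_decomp h2 with ⟨z', s3, rfl, h3⟩
  have : s3 = 0 := by simpa using h3
  subst this
  exact ⟨x', y', z', rfl⟩

lemma map_snd_triple_decomp {s : Multiset (α × β)} {x y z : β}
    (h : s.map Prod.snd = {x, y, z}) :
    ∃ x' y' z', s = {(x', x), (y', y), (z', z)} := by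
  rcases map_snd_cons_decomp h with ⟨x', s1, rfl, h1⟩
  rcases map_snd_cons_decomp h1 with ⟨y', s2, rfl, h2⟩
  rcases map_snd_cons_decomp h2 with ⟨z', s3, rfl, h3⟩
  have : s3 = 0 := by simpa using h3
  subst this
  exact ⟨x', y', z', rfl⟩

lemma map_snd_pair_decomp {s : Multiset (α × β)} {x y : β}
    (h : s.map Prod.snd = {x, y}) :
    ∃ x' y', s = {(x', x), (y', y)} := by
  rcases map_snd_cons_decomp h with ⟨x', s1, rfl, h1⟩
  rcases map_snd_cons_decomp h1 with ⟨y', s2, rfl, h2⟩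
  have : s2 = 0 := by simpa using h2
  subst this
  exact ⟨x', y', rfl⟩

lemma comp_decomp : ∀ (p₁ : Multiset (α × β)) (p₂ : Multiset (β × γ)),
    p₁.map Prod.snd = p₂.map Prod.fst →
    ∃ s : Multiset (α × β × γ),
      s.map (fun x => (x.1, x.2.1)) = p₁ ∧ s.map Prod.snd = p₂ := by
  intro p₁
  induction p₁ using Multiset.induction with
  | empty =>
    intro p₂ h
    have : p₂ = 0 := by
      have h2 : p₂.map Prod.fst = 0 := by simpa using h.symm
      simpa using h2
    exact ⟨0, by simp, by simp [this]⟩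
  | cons q t ih =>
    intro p₂ h
    rw [Multiset.map_cons] at h
    have hf : p₂.map Prod.fst = q.2 ::ₘ t.map Prod.snd := h.symm
    have hq2 : q.2 ∈ p₂.map Prod.fst := hf ▸ Multiset.mem_cons_self _ _
    rcases Multiset.mem_map.1 hq2 with ⟨r, hr, hr1⟩
    rcases Multiset.exists_cons_of_mem hr with ⟨p₂', rfl⟩
    rw [Multiset.map_cons, hr1] at hf
    have h2 : t.map Prod.snd = p₂'.map Prod.fst :=
      ((Multiset.cons_inj_right _).mp hf).symm
    rcases ih p₂' h2 with ⟨s, hs1, hs2⟩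
    refine ⟨(q.1, r) ::ₘ s, ?_, by simp [hs2]⟩
    rw [Multiset.map_cons, hs1]
    simp [hr1]

end AuxMultiset

section AuxDom
variable {Λ : Type} {Δ : ℕ}

/-- Nonstrict componentwise domination (up to matching). -/
def Dom (m' m : Multiset (SubS Λ)) : Prop :=
  ∃ p : Multiset (SubS Λ × SubS Λ), p.map Prod.fst = m' ∧ p.map Prod.snd = m ∧
    ∀ q ∈ p, q.2.val ⊆ q.1.val

lemma Dom.refl (m : Multiset (SubS Λ)) : Dom m m := by
  refine ⟨m.map (fun x => (x, x)), by simp [Multiset.map_map, Function.comp], by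
    simp [Multiset.map_map, Function.comp], ?_⟩
  intro q hq
  rcases Multiset.mem_map.1 hq with ⟨x, _, rfl⟩
  exact subset_rfl

lemma Dom.trans {m₁ m₂ m₃ : Multiset (SubS Λ)} (h12 : Dom m₁ m₂) (h23 : Dom m₂ m₃) :
    Dom m₁ m₃ := by
  rcases h12 with ⟨p₁, hp1f, hp1s, hp1⟩
  rcases h23 with ⟨p₂, hp2f, hp2s, hp2⟩
  rcases comp_decomp p₁ p₂ (by rw [hp1s, hp2f]) with ⟨s, hs1, hs2⟩
  refine ⟨s.map (fun x => (x.1, x.2.2)), ?_, ?_, ?_⟩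
  · rw [← hp1f, ← hs1]; simp [Multiset.map_map, Function.comp]
  · rw [← hp2s, ← hs2]; simp [Multiset.map_map, Function.comp]
  · intro q hq
    rcases Multiset.mem_map.1 hq with ⟨x, hx, rfl⟩
    have h1 : (x.1, x.2.1) ∈ p₁ := hs1 ▸ Multiset.mem_map_of_mem _ hx
    have h2 : x.2 ∈ p₂ := hs2 ▸ Multiset.mem_map_of_mem _ hx
    exact (hp2 _ h2).trans (hp1 _ h1)

lemma Dom.of_strict {m' m : Multiset (SubS Λ)} (h : strictlyDominates m' m) :
    Dom m' m := by
  rcases h with ⟨p, h1, h2, h3, -⟩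
  exact ⟨p, h1, h2, h3⟩

/-- Measure of a multiset of subsets. -/
noncomputable def msMeasure (m : Multiset (SubS Λ)) : ℕ :=
  (m.map (fun S => S.val.ncard)).sum

lemma msMeasure_lt_of_strict [Finite Λ] {m' m : Multiset (SubS Λ)}
    (h : strictlyDominates m' m) : msMeasure m < msMeasure m' := by
  rcases h with ⟨p, h1, h2, h3, q, hq, hstrict⟩
  rcases Multiset.exists_cons_of_mem hq with ⟨t, rfl⟩
  have hm : msMeasure m = q.2.val.ncard + (t.map (fun r => r.2.val.ncard)).sum := by
    rw [msMeasure, ← h2]; simp [Multiset.map_map, Function.comp]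
  have hm' : msMeasure m' = q.1.val.ncard + (t.map (fun r => r.1.val.ncard)).sum := by
    rw [msMeasure, ← h1]; simp [Multiset.map_map, Function.comp]
  rw [hm, hm']
  have hlt : q.2.val.ncard < q.1.val.ncard :=
    Set.ncard_lt_ncard hstrict (Set.toFinite _)
  have hle : (t.map (fun r => r.2.val.ncard)).sum ≤
      (t.map (fun r => r.1.val.ncard)).sum := by
    apply Multiset.sum_map_le_sum_map
    intro r hr
    exact Set.ncard_le_ncard (h3 r (Multiset.mem_cons_of_mem hr)) (Set.toFinite _)
  omega

lemma msMeasure_le [Finite Λ] {m : Multiset (SubS Λ)} {n : ℕ}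
    (h : Multiset.card m = n) : msMeasure m ≤ n * Nat.card Λ := by
  have hb : ∀ x ∈ m.map (fun S : SubS Λ => S.val.ncard), x ≤ Nat.card Λ := by
    intro x hx
    rcases Multiset.mem_map.1 hx with ⟨S, _, rfl⟩
    calc S.val.ncard ≤ (Set.univ : Set Λ).ncard :=
          Set.ncard_le_ncard (Set.subset_univ _) Set.finite_univ
      _ = Nat.card Λ := Set.ncard_univ Λ
  calc msMeasure m ≤ (Multiset.card (m.map (fun S : SubS Λ => S.val.ncard))) • Nat.card Λ :=
        Multiset.sum_le_card_nsmul _ _ hb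
    _ = n * Nat.card Λ := by rw [Multiset.card_map, h]; simp

lemma exists_maximal_node [Finite Λ] (P : NEProblem Δ Λ) :
    ∀ m, univNode P m → ∃ m', m' ∈ REbarNode P ∧ Dom m' m := by
  have key : ∀ K m, univNode P m → Δ * Nat.card Λ - msMeasure m ≤ K →
      ∃ m', m' ∈ REbarNode P ∧ Dom m' m := by
    intro K
    induction K with
    | zero =>
      intro m hm hK
      refine ⟨m, ⟨hm, ?_⟩, Dom.refl m⟩
      intro m'' hm'' hstrict
      have h1 := msMeasure_lt_of_strict hstrict
      have h2 := msMeasure_le (Λ := Λ) (hm''.1)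
      have h3 := msMeasure_le (Λ := Λ) (hm.1)
      omega
    | succ K ih =>
      intro m hm hK
      by_cases hmax : ∀ m'', univNode P m'' → ¬ strictlyDominates m'' m
      · exact ⟨m, ⟨hm, hmax⟩, Dom.refl m⟩
      · push_neg at hmax
        rcases hmax with ⟨m'', hm'', hstrict⟩
        have h1 := msMeasure_lt_of_strict hstrict
        have h2 := msMeasure_le (Λ := Λ) (hm''.1)
        rcases ih m'' hm'' (by omega) with ⟨m', hm', hd⟩
        exact ⟨m', hm', hd.trans (Dom.of_strict hstrict)⟩
  intro m hm
  exact key (Δ * Nat.card Λ) m hm (by omega)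

lemma exists_maximal_edge [Finite Λ] (P : NEProblem Δ Λ) :
    ∀ m, univEdge P m → ∃ m', m' ∈ REedge P ∧ Dom m' m := by
  have key : ∀ K m, univEdge P m → 2 * Nat.card Λ - msMeasure m ≤ K →
      ∃ m', m' ∈ REedge P ∧ Dom m' m := by
    intro K
    induction K with
    | zero =>
      intro m hm hK
      refine ⟨m, ⟨hm, ?_⟩, Dom.refl m⟩
      intro m'' hm'' hstrict
      have h1 := msMeasure_lt_of_strict hstrict
      have h2 : Multiset.card m'' = 2 := by rcases hm'' with ⟨S₁, S₂, rfl, -⟩; rfl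
      have h2' := msMeasure_le (Λ := Λ) h2
      have h3 : Multiset.card m = 2 := by rcases hm with ⟨S₁, S₂, rfl, -⟩; rfl
      have h3' := msMeasure_le (Λ := Λ) h3
      omega
    | succ K ih =>
      intro m hm hK
      by_cases hmax : ∀ m'', univEdge P m'' → ¬ strictlyDominates m'' m
      · exact ⟨m, ⟨hm, hmax⟩, Dom.refl m⟩
      · push_neg at hmax
        rcases hmax with ⟨m'', hm'', hstrict⟩
        have h1 := msMeasure_lt_of_strict hstrict
        have h2 : Multiset.card m'' = 2 := by rcases hm'' with ⟨S₁, S₂, rfl, -⟩; rfl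
        have h2' := msMeasure_le (Λ := Λ) h2
        rcases ih m'' hm'' (by omega) with ⟨m', hm', hd⟩
        exact ⟨m', hm', hd.trans (Dom.of_strict hstrict)⟩
  intro m hm
  exact key (2 * Nat.card Λ) m hm (by omega)

lemma exists_max_node₃ [Finite Λ] (P : NEProblem Δ Λ) (X Y Z : SubS Λ)
    (h : univNode P ({X, Y, Z} : Multiset (SubS Λ))) :
    ∃ X' Y' Z' : SubS Λ, ({X', Y', Z'} : Multiset (SubS Λ)) ∈ REbarNode P ∧
      X.val ⊆ X'.val ∧ Y.val ⊆ Y'.val ∧ Z.val ⊆ Z'.val := by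
  rcases exists_maximal_node P _ h with ⟨m', hm', ⟨p, hpf, hps, hsub⟩⟩
  rcases map_snd_triple_decomp hps with ⟨X', Y', Z', rfl⟩
  refine ⟨X', Y', Z', ?_, ?_, ?_, ?_⟩
  · have hmm : m' = {X', Y', Z'} := by rw [← hpf]; simp
    rwa [← hmm]
  · exact hsub (X', X) (by simp)
  · exact hsub (Y', Y) (by simp)
  · exact hsub (Z', Z) (by simp)

lemma exists_max_edge₂ [Finite Λ] (P : NEProblem Δ Λ) (X Y : SubS Λ)
    (h : univEdge P ({X, Y} : Multiset (SubS Λ))) :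
    ∃ X' Y' : SubS Λ, ({X', Y'} : Multiset (SubS Λ)) ∈ REedge P ∧
      X.val ⊆ X'.val ∧ Y.val ⊆ Y'.val := by
  rcases exists_maximal_edge P _ h with ⟨m', hm', ⟨p, hpf, hps, hsub⟩⟩
  rcases map_snd_pair_decomp hps with ⟨X', Y', rfl⟩
  refine ⟨X', Y', ?_, ?_, ?_⟩
  · have hmm : m' = {X', Y'} := by rw [← hpf]; simp
    rwa [← hmm]
  · exact hsub (X', X) (by simp)
  · exact hsub (Y', Y) (by simp)

end AuxDom
section AuxRE
variable {Λ : Type}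

lemma univNode_triple {P : NEProblem 3 Λ} (M₁ M₂ M₃ : SubS Λ)
    (h : ∀ x ∈ M₁.val, ∀ y ∈ M₂.val, ∀ z ∈ M₃.val,
      ({x, y, z} : Multiset Λ) ∈ P.nodeC) :
    univNode P ({M₁, M₂, M₃} : Multiset (SubS Λ)) := by
  refine ⟨rfl, ?_⟩
  intro p hpf hpsel
  rcases map_fst_triple_decomp hpf with ⟨x, y, z, rfl⟩
  have hx := hpsel (M₁, x) (by simp)
  have hy := hpsel (M₂, y) (by simp)
  have hz := hpsel (M₃, z) (by simp)
  simpa using h x hx y hy z hz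

lemma univEdge_pair {P : NEProblem 3 Λ} (S₁ S₂ : SubS Λ)
    (h : ∀ L₁ ∈ S₁.val, ∀ L₂ ∈ S₂.val, ({L₁, L₂} : Multiset Λ) ∈ P.edgeC) :
    univEdge P ({S₁, S₂} : Multiset (SubS Λ)) :=
  ⟨S₁, S₂, rfl, h⟩

lemma mem_RE_nodeC (P : NEProblem 3 Λ) (X Y Z : SubS Λ) (x y z : Λ)
    (hx : x ∈ X.val) (hy : y ∈ Y.val) (hz : z ∈ Z.val)
    (hX : ∃ ec ∈ REedge P, X ∈ ec) (hY : ∃ ec ∈ REedge P, Y ∈ ec)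
    (hZ : ∃ ec ∈ REedge P, Z ∈ ec)
    (hN : ({x, y, z} : Multiset Λ) ∈ P.nodeC) :
    ({X, Y, Z} : Multiset (SubS Λ)) ∈ (RE P).nodeC := by
  refine ⟨rfl, ?_, ⟨{(X, x), (Y, y), (Z, z)}, by simp, ?_, by simpa using hN⟩⟩
  · intro S hS
    rcases Multiset.mem_cons.1 hS with rfl | hS
    · exact hX
    rcases Multiset.mem_cons.1 hS with rfl | hS
    · exact hY
    rw [Multiset.mem_singleton.1 hS]
    exact hZ
  · intro q hq
    rcases Multiset.mem_cons.1 hq with rfl | hq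
    · exact hx
    rcases Multiset.mem_cons.1 hq with rfl | hq
    · exact hy
    rw [Multiset.mem_singleton.1 hq]
    exact hz

lemma mem_Qop_edgeC (P : NEProblem 3 Λ) (S₁ S₂ : SubS (SubS Λ))
    (cfg₁ cfg₂ : Multiset (SubS (SubS Λ)))
    (h₁ : cfg₁ ∈ REbarNode (RE P)) (hm₁ : S₁ ∈ cfg₁)
    (h₂ : cfg₂ ∈ REbarNode (RE P)) (hm₂ : S₂ ∈ cfg₂)
    (L₁ L₂ : SubS Λ) (hL₁ : L₁ ∈ S₁.val) (hL₂ : L₂ ∈ S₂.val)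
    (hE : ({L₁, L₂} : Multiset (SubS Λ)) ∈ REedge P) :
    ({S₁, S₂} : Multiset (SubS (SubS Λ))) ∈ (Qop P).edgeC :=
  ⟨S₁, S₂, rfl, ⟨cfg₁, h₁, hm₁⟩, ⟨cfg₂, h₂, hm₂⟩, L₁, hL₁, L₂, hL₂, hE⟩

end AuxRE

section RealInv

/-- The D-images of the invariant structure. -/
def DImg {Λ : Type} (e₀ : Λ) (d e : ℕ → Λ) (n : ℕ) (x : Λ) : Prop :=
  x = e₀ ∨ ∃ i, i < n ∧ (x = d i ∨ x = e i)

/-- The invariant: `P` admits (occurrence images of) the structure of the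
`n`-th member of the fixed-point family. -/
def RealS {Λ : Type} (P : NEProblem 3 Λ) (n : ℕ) : Prop :=
  ∃ (b c e₀ : Λ) (a d e : ℕ → Λ),
    ({b, c, e₀} : Multiset Λ) ∈ P.nodeC ∧
    (∀ i, i < n → ({a i, d i, e i} : Multiset Λ) ∈ P.nodeC) ∧
    ({b, c} : Multiset Λ) ∈ P.edgeC ∧
    (∀ x, DImg e₀ d e n x → ({b, x} : Multiset Λ) ∈ P.edgeC) ∧
    (∀ x, DImg e₀ d e n x → ({c, x} : Multiset Λ) ∈ P.edgeC) ∧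
    (∀ x y, DImg e₀ d e n x → DImg e₀ d e n y → ({x, y} : Multiset Λ) ∈ P.edgeC) ∧
    (∀ i, i < n → ({a i, e₀} : Multiset Λ) ∈ P.edgeC) ∧
    (∀ i m, i < n → m < n → ({a i, e m} : Multiset Λ) ∈ P.edgeC) ∧
    (∀ i j, i < j → j < n → ({a i, d j} : Multiset Λ) ∈ P.edgeC)

/-- Pushing the invariant through a relaxation. -/
lemma RealS.push {Λ Λ' : Type} {P : NEProblem 3 Λ} {P' : NEProblem 3 Λ'} {n : ℕ}
    (hr : RealS P n) (hrel : Relaxes P P') : RealS P' n := by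
  rcases hrel with ⟨p, w1, w2, w3⟩
  rcases hr with ⟨b, c, e₀, a, d, e, h1, h2, h3, h4, h5, h6, h7, h8, h9⟩
  rcases map_fst_triple_decomp (w1 _ h1) with ⟨b', c', e₀', hd0⟩
  have hdi : ∀ i, ∃ x y z : Λ', i < n →
      p ({a i, d i, e i} : Multiset Λ) = {(a i, x), (d i, y), (e i, z)} := by
    intro i
    by_cases hi : i < n
    · rcases map_fst_triple_decomp (w1 _ (h2 i hi)) with ⟨x, y, z, hxyz⟩
      exact ⟨x, y, z, fun _ => hxyz⟩
    · exact ⟨b', b', b', fun h => absurd h hi⟩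
  choose a' d' e' hp using hdi
  -- occurrence predicate
  have occ0b : (b, b') ∈ p ({b, c, e₀} : Multiset Λ) := by rw [hd0]; simp
  have occ0c : (c, c') ∈ p ({b, c, e₀} : Multiset Λ) := by rw [hd0]; simp
  have occ0e : (e₀, e₀') ∈ p ({b, c, e₀} : Multiset Λ) := by rw [hd0]; simp
  have occa : ∀ i, i < n → (a i, a' i) ∈ p ({a i, d i, e i} : Multiset Λ) := by
    intro i hi; rw [hp i hi]; simp
  have occd : ∀ i, i < n → (d i, d' i) ∈ p ({a i, d i, e i} : Multiset Λ) := by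
    intro i hi; rw [hp i hi]; simp
  have occe : ∀ i, i < n → (e i, e' i) ∈ p ({a i, d i, e i} : Multiset Λ) := by
    intro i hi; rw [hp i hi]; simp
  -- any new D-image comes from an old D-image occurrence
  have dimg : ∀ x', DImg e₀' d' e' n x' →
      ∃ x C, C ∈ P.nodeC ∧ (x, x') ∈ p C ∧ DImg e₀ d e n x := by
    intro x' hx'
    rcases hx' with rfl | ⟨i, hi, rfl | rfl⟩
    · exact ⟨e₀, _, h1, occ0e, Or.inl rfl⟩
    · exact ⟨d i, _, h2 i hi, occd i hi, Or.inr ⟨i, hi, Or.inl rfl⟩⟩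
    · exact ⟨e i, _, h2 i hi, occe i hi, Or.inr ⟨i, hi, Or.inr rfl⟩⟩
  refine ⟨b', c', e₀', a', d', e', ?_, ?_, ?_, ?_, ?_, ?_, ?_, ?_, ?_⟩
  · have := w2 _ h1
    rw [hd0] at this
    simpa using this
  · intro i hi
    have := w2 _ (h2 i hi)
    rw [hp i hi] at this
    simpa using this
  · exact w3 _ h1 _ h1 _ occ0b _ occ0c h3
  · intro x' hx'
    rcases dimg x' hx' with ⟨x, C, hC, hocc, hdx⟩
    exact w3 _ h1 _ hC _ occ0b _ hocc (h4 x hdx)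
  · intro x' hx'
    rcases dimg x' hx' with ⟨x, C, hC, hocc, hdx⟩
    exact w3 _ h1 _ hC _ occ0c _ hocc (h5 x hdx)
  · intro x' y' hx' hy'
    rcases dimg x' hx' with ⟨x, C, hC, hocc, hdx⟩
    rcases dimg y' hy' with ⟨y, C2, hC2, hocc2, hdy⟩
    exact w3 _ hC _ hC2 _ hocc _ hocc2 (h6 x y hdx hdy)
  · intro i hi
    exact w3 _ (h2 i hi) _ h1 _ (occa i hi) _ occ0e (h7 i hi)
  · intro i m hi hm
    exact w3 _ (h2 i hi) _ (h2 m hm) _ (occa i hi) _ (occe m hm) (h8 i m hi hm)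
  · intro i j hij hj
    exact w3 _ (h2 i (hij.trans hj)) _ (h2 j hj) _ (occa i (hij.trans hj)) _
      (occd j hj) (h9 i j hij hj)

end RealInv
section BaseLemma

lemma base_realS {Λh : Type} [Fintype Λh] (Ph : NEProblem 3 Λh)
    (hrel : Relaxes SSO Ph) : RealS (Qop Ph) 0 := by
  rcases hrel with ⟨p, w1, w2, w3⟩
  have hC₁ : ({SSOLabel.B, SSOLabel.B, SSOLabel.C} : Multiset SSOLabel) ∈ SSO.nodeC :=
    ⟨rfl, by simp, by simp⟩
  have hC₂ : ({SSOLabel.B, SSOLabel.C, SSOLabel.C} : Multiset SSOLabel) ∈ SSO.nodeC :=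
    ⟨rfl, by simp, by simp⟩
  rcases map_fst_triple_decomp (w1 _ hC₁) with ⟨b₁, b₂, c₁, hp₁⟩
  rcases map_fst_triple_decomp (w1 _ hC₂) with ⟨b₃, c₂, c₃, hp₂⟩
  have hBC : ({SSOLabel.B, SSOLabel.C} : Multiset SSOLabel) ∈ SSO.edgeC := rfl
  -- cross edges
  have cross : ∀ x y : Λh,
      ((SSOLabel.B, x) ∈ p {SSOLabel.B, SSOLabel.B, SSOLabel.C} ∨
       (SSOLabel.B, x) ∈ p {SSOLabel.B, SSOLabel.C, SSOLabel.C}) →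
      ((SSOLabel.C, y) ∈ p {SSOLabel.B, SSOLabel.B, SSOLabel.C} ∨
       (SSOLabel.C, y) ∈ p {SSOLabel.B, SSOLabel.C, SSOLabel.C}) →
      ({x, y} : Multiset Λh) ∈ Ph.edgeC := by
    intro x y hx hy
    rcases hx with hx | hx <;> rcases hy with hy | hy
    · exact w3 _ hC₁ _ hC₁ _ hx _ hy hBC
    · exact w3 _ hC₁ _ hC₂ _ hx _ hy hBC
    · exact w3 _ hC₂ _ hC₁ _ hx _ hy hBC
    · exact w3 _ hC₂ _ hC₂ _ hx _ hy hBC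
  have mb₁ : (SSOLabel.B, b₁) ∈ p {SSOLabel.B, SSOLabel.B, SSOLabel.C} := by rw [hp₁]; simp
  have mb₂ : (SSOLabel.B, b₂) ∈ p {SSOLabel.B, SSOLabel.B, SSOLabel.C} := by rw [hp₁]; simp
  have mc₁ : (SSOLabel.C, c₁) ∈ p {SSOLabel.B, SSOLabel.B, SSOLabel.C} := by rw [hp₁]; simp
  have mb₃ : (SSOLabel.B, b₃) ∈ p {SSOLabel.B, SSOLabel.C, SSOLabel.C} := by rw [hp₂]; simp
  have mc₂ : (SSOLabel.C, c₂) ∈ p {SSOLabel.B, SSOLabel.C, SSOLabel.C} := by rw [hp₂]; simp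
  have mc₃ : (SSOLabel.C, c₃) ∈ p {SSOLabel.B, SSOLabel.C, SSOLabel.C} := by rw [hp₂]; simp
  -- node configurations of Ph
  have hN₁ : ({b₁, b₂, c₁} : Multiset Λh) ∈ Ph.nodeC := by
    have := w2 _ hC₁; rw [hp₁] at this; simpa using this
  have hN₂ : ({b₃, c₂, c₃} : Multiset Λh) ∈ Ph.nodeC := by
    have := w2 _ hC₂; rw [hp₂] at this; simpa using this
  -- seed sets
  set sB : Set Λh := {b₁, b₂, b₃} with hsB
  set sC : Set Λh := {c₁, c₂, c₃} with hsC
  have hUE : univEdge Ph ({⟨sB, ⟨b₁, by simp [hsB]⟩⟩, ⟨sC, ⟨c₁, by simp [hsC]⟩⟩} :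
      Multiset (SubS Λh)) := by
    apply univEdge_pair
    intro L₁ hL₁ L₂ hL₂
    simp only [hsB, Set.mem_insert_iff, Set.mem_singleton_iff] at hL₁
    simp only [hsC, Set.mem_insert_iff, Set.mem_singleton_iff] at hL₂
    apply cross
    · rcases hL₁ with rfl | rfl | rfl
      · exact Or.inl mb₁
      · exact Or.inl mb₂
      · exact Or.inr mb₃
    · rcases hL₂ with rfl | rfl | rfl
      · exact Or.inl mc₁
      · exact Or.inr mc₂
      · exact Or.inr mc₃
  rcases exists_max_edge₂ Ph _ _ hUE with ⟨SB, SC, hEdge, hsubB, hsubC⟩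
  have hGB : ∃ ec ∈ REedge Ph, SB ∈ ec := ⟨_, hEdge, by simp⟩
  have hGC : ∃ ec ∈ REedge Ph, SC ∈ ec := ⟨_, hEdge, by simp⟩
  have hb₁ : b₁ ∈ SB.val := hsubB (by simp [hsB])
  have hb₂ : b₂ ∈ SB.val := hsubB (by simp [hsB])
  have hb₃ : b₃ ∈ SB.val := hsubB (by simp [hsB])
  have hc₁ : c₁ ∈ SC.val := hsubC (by simp [hsC])
  have hc₂ : c₂ ∈ SC.val := hsubC (by simp [hsC])
  have hc₃ : c₃ ∈ SC.val := hsubC (by simp [hsC])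
  -- inner node configurations
  have in₁ : ({SB, SC, SB} : Multiset (SubS Λh)) ∈ (RE Ph).nodeC := by
    apply mem_RE_nodeC Ph SB SC SB b₁ c₁ b₂ hb₁ hc₁ hb₂ hGB hGC hGB
    rw [triple_swap23]; exact hN₁
  have in₂ : ({SB, SC, SC} : Multiset (SubS Λh)) ∈ (RE Ph).nodeC :=
    mem_RE_nodeC Ph SB SC SC b₃ c₂ c₃ hb₃ hc₂ hc₃ hGB hGC hGC hN₂
  -- outer seeds
  set oB : SubS (SubS Λh) := ⟨{SB}, ⟨SB, by simp⟩⟩ with hoB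
  set oC : SubS (SubS Λh) := ⟨{SC}, ⟨SC, by simp⟩⟩ with hoC
  set oE : SubS (SubS Λh) := ⟨{SB, SC}, ⟨SB, by simp⟩⟩ with hoE
  have hUN : univNode (RE Ph) ({oB, oC, oE} : Multiset (SubS (SubS Λh))) := by
    apply univNode_triple
    intro x hx y hy z hz
    simp only [hoB, Set.mem_singleton_iff] at hx
    simp only [hoC, Set.mem_singleton_iff] at hy
    simp only [hoE, Set.mem_insert_iff, Set.mem_singleton_iff] at hz
    subst hx; subst hy
    rcases hz with rfl | rfl
    · exact in₁
    · exact in₂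
  rcases exists_max_node₃ (RE Ph) _ _ _ hUN with ⟨Bh, Ch, Eh, hcfg, hsB', hsC', hsE'⟩
  have mSB_B : SB ∈ Bh.val := hsB' (by simp [hoB])
  have mSC_C : SC ∈ Ch.val := hsC' (by simp [hoC])
  have mSB_E : SB ∈ Eh.val := hsE' (by simp [hoE])
  have mSC_E : SC ∈ Eh.val := hsE' (by simp [hoE])
  have hBh : Bh ∈ ({Bh, Ch, Eh} : Multiset (SubS (SubS Λh))) := by simp
  have hCh : Ch ∈ ({Bh, Ch, Eh} : Multiset (SubS (SubS Λh))) := by simp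
  have hEh : Eh ∈ ({Bh, Ch, Eh} : Multiset (SubS (SubS Λh))) := by simp
  have hEdge' : ({SC, SB} : Multiset (SubS Λh)) ∈ REedge Ph := by
    rw [pair_comm']; exact hEdge
  refine ⟨Bh, Ch, Eh, (fun _ => Bh), (fun _ => Bh), (fun _ => Bh), hcfg, ?_, ?_, ?_, ?_, ?_, ?_, ?_, ?_⟩
  · intro i hi; omega
  · exact mem_Qop_edgeC Ph Bh Ch _ _ hcfg hBh hcfg hCh SB SC mSB_B mSC_C hEdge
  · intro x hx
    rcases hx with hx0 | ⟨i, hi, -⟩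
    · rw [hx0]
      exact mem_Qop_edgeC Ph Bh Eh _ _ hcfg hBh hcfg hEh SB SC mSB_B mSC_E hEdge
    · omega
  · intro x hx
    rcases hx with hx0 | ⟨i, hi, -⟩
    · rw [hx0]
      exact mem_Qop_edgeC Ph Ch Eh _ _ hcfg hCh hcfg hEh SC SB mSC_C mSB_E hEdge'
    · omega
  · intro x y hx hy
    rcases hx with hx0 | ⟨i, hi, -⟩
    · rcases hy with hy0 | ⟨i, hi, -⟩
      · rw [hx0, hy0]
        exact mem_Qop_edgeC Ph Eh Eh _ _ hcfg hEh hcfg hEh SB SC mSB_E mSC_E hEdge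
      · omega
    · omega
  · intro i hi; omega
  · intro i m hi hm; omega
  · intro i j hij hj; omega

end BaseLemma
section StepLemma

lemma step_realS {Λh : Type} [Fintype Λh] (Ph : NEProblem 3 Λh) {n : ℕ}
    (hr : RealS Ph n) : RealS (Qop Ph) (n + 1) := by
  rcases hr with ⟨b, c, e₀, a, d, e, h1, h2, h3, h4, h5, h6, h7, h8, h9⟩
  classical
  -- seed sets at the first level
  set sD : Set Λh := {x | DImg e₀ d e n x} with hsD
  set SBs : SubS Λh := ⟨insert b sD, ⟨b, Set.mem_insert _ _⟩⟩ with hSBs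
  set SCs : SubS Λh := ⟨insert c sD, ⟨c, Set.mem_insert _ _⟩⟩ with hSCs
  set SUs : ℕ → SubS Λh := fun m =>
    ⟨insert b (insert c (sD ∪ {x | ∃ i, i < m ∧ x = a i})), ⟨b, Set.mem_insert _ _⟩⟩
    with hSUs
  set SVs : ℕ → SubS Λh := fun m =>
    ⟨{x | x = e₀ ∨ (∃ i, i < n ∧ x = e i) ∨ (∃ j, m ≤ j ∧ j < n ∧ x = d j)},
      ⟨e₀, Or.inl rfl⟩⟩ with hSVs
  have hVD : ∀ m x, x ∈ (SVs m).val → DImg e₀ d e n x := by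
    intro m x hx
    rcases hx with rfl | ⟨i, hi, rfl⟩ | ⟨j, hj1, hj2, rfl⟩
    · exact Or.inl rfl
    · exact Or.inr ⟨i, hi, Or.inr rfl⟩
    · exact Or.inr ⟨j, hj2, Or.inl rfl⟩
  -- univEdge for the seeds
  have hUEbc : univEdge Ph ({SBs, SCs} : Multiset (SubS Λh)) := by
    apply univEdge_pair
    intro L₁ hL₁ L₂ hL₂
    rcases Set.mem_insert_iff.1 hL₁ with rfl | hL₁ <;>
      rcases Set.mem_insert_iff.1 hL₂ with rfl | hL₂
    · exact h3
    · exact h4 _ hL₂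
    · rw [pair_comm']; exact h5 _ hL₁
    · exact h6 _ _ hL₁ hL₂
  have hUEuv : ∀ m, m ≤ n → univEdge Ph ({SUs m, SVs m} : Multiset (SubS Λh)) := by
    intro m hm
    apply univEdge_pair
    intro L₁ hL₁ L₂ hL₂
    have hL₂' := hVD m _ hL₂
    rcases Set.mem_insert_iff.1 hL₁ with rfl | hL₁
    · exact h4 _ hL₂'
    rcases Set.mem_insert_iff.1 hL₁ with rfl | hL₁
    · exact h5 _ hL₂'
    rcases hL₁ with hL₁ | ⟨i, hi, rfl⟩
    · exact h6 _ _ hL₁ hL₂'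
    · -- L₁ = a i with i < m
      rcases hL₂ with rfl | ⟨i', hi', rfl⟩ | ⟨j, hj1, hj2, rfl⟩
      · exact h7 i (by omega)
      · exact h8 i i' (by omega) hi'
      · exact h9 i j (by omega) hj2
  -- maximize the edge seeds
  rcases exists_max_edge₂ Ph _ _ hUEbc with ⟨SB, SC, hEdgeBC, hsubSB, hsubSC⟩
  have hUVex : ∀ m, ∃ UV : SubS Λh × SubS Λh, m ≤ n →
      (({UV.1, UV.2} : Multiset (SubS Λh)) ∈ REedge Ph ∧
        (SUs m).val ⊆ UV.1.val ∧ (SVs m).val ⊆ UV.2.val) := by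
    intro m
    by_cases hm : m ≤ n
    · rcases exists_max_edge₂ Ph _ _ (hUEuv m hm) with ⟨Um, Vm, hE, hU, hV⟩
      exact ⟨(Um, Vm), fun _ => ⟨hE, hU, hV⟩⟩
    · exact ⟨(SB, SB), fun h => absurd h hm⟩
  choose UV hUV using hUVex
  set U : ℕ → SubS Λh := fun m => (UV m).1 with hU
  set V : ℕ → SubS Λh := fun m => (UV m).2 with hV
  have hUe : ∀ m, m ≤ n → ({U m, V m} : Multiset (SubS Λh)) ∈ REedge Ph :=
    fun m hm => (hUV m hm).1
  -- membership facts
  have hbSB : b ∈ SB.val := hsubSB (Set.mem_insert _ _)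
  have hcSC : c ∈ SC.val := hsubSC (Set.mem_insert _ _)
  have hDSB : ∀ x, DImg e₀ d e n x → x ∈ SB.val :=
    fun x hx => hsubSB (Set.mem_insert_of_mem _ hx)
  have hDSC : ∀ x, DImg e₀ d e n x → x ∈ SC.val :=
    fun x hx => hsubSC (Set.mem_insert_of_mem _ hx)
  have hbU : ∀ m, m ≤ n → b ∈ (U m).val :=
    fun m hm => (hUV m hm).2.1 (Set.mem_insert _ _)
  have hcU : ∀ m, m ≤ n → c ∈ (U m).val :=
    fun m hm => (hUV m hm).2.1 (Set.mem_insert_of_mem _ (Set.mem_insert _ _))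
  have hDU : ∀ m, m ≤ n → ∀ x, DImg e₀ d e n x → x ∈ (U m).val :=
    fun m hm x hx => (hUV m hm).2.1
      (Set.mem_insert_of_mem _ (Set.mem_insert_of_mem _ (Set.mem_union_left _ hx)))
  have haU : ∀ m, m ≤ n → ∀ i, i < m → a i ∈ (U m).val :=
    fun m hm i hi => (hUV m hm).2.1
      (Set.mem_insert_of_mem _ (Set.mem_insert_of_mem _ (Set.mem_union_right _ ⟨i, hi, rfl⟩)))
  have he₀V : ∀ m, m ≤ n → e₀ ∈ (V m).val :=
    fun m hm => (hUV m hm).2.2 (Or.inl rfl)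
  have heV : ∀ m, m ≤ n → ∀ i, i < n → e i ∈ (V m).val :=
    fun m hm i hi => (hUV m hm).2.2 (Or.inr (Or.inl ⟨i, hi, rfl⟩))
  have hdV : ∀ m, m ≤ n → ∀ j, m ≤ j → j < n → d j ∈ (V m).val :=
    fun m hm j hj1 hj2 => (hUV m hm).2.2 (Or.inr (Or.inr ⟨j, hj1, hj2, rfl⟩))
  have he₀SB : e₀ ∈ SB.val := hDSB e₀ (Or.inl rfl)
  have he₀SC : e₀ ∈ SC.val := hDSC e₀ (Or.inl rfl)
  -- "good" labels
  have hGB : ∃ ec ∈ REedge Ph, SB ∈ ec := ⟨_, hEdgeBC, by simp⟩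
  have hGC : ∃ ec ∈ REedge Ph, SC ∈ ec := ⟨_, hEdgeBC, by simp⟩
  have hGU : ∀ m, m ≤ n → ∃ ec ∈ REedge Ph, U m ∈ ec :=
    fun m hm => ⟨_, hUe m hm, by simp⟩
  have hGV : ∀ m, m ≤ n → ∃ ec ∈ REedge Ph, V m ∈ ec :=
    fun m hm => ⟨_, hUe m hm, by simp⟩
  -- inner node configuration facts
  have nBC : ∀ X Y Z : SubS Λh, b ∈ X.val → c ∈ Y.val → e₀ ∈ Z.val →
      (∃ ec ∈ REedge Ph, X ∈ ec) → (∃ ec ∈ REedge Ph, Y ∈ ec) →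
      (∃ ec ∈ REedge Ph, Z ∈ ec) →
      ({X, Y, Z} : Multiset (SubS Λh)) ∈ (RE Ph).nodeC :=
    fun X Y Z hx hy hz hX hY hZ => mem_RE_nodeC Ph X Y Z b c e₀ hx hy hz hX hY hZ h1
  have nA : ∀ mx my (Z : SubS Λh), my < mx → mx ≤ n →
      (∃ ec ∈ REedge Ph, Z ∈ ec) → e my ∈ Z.val →
      ({U mx, V my, Z} : Multiset (SubS Λh)) ∈ (RE Ph).nodeC := by
    intro mx my Z hlt hmx hGZ heZ
    exact mem_RE_nodeC Ph _ _ _ (a my) (d my) (e my)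
      (haU mx hmx my hlt) (hdV my (by omega) my le_rfl (by omega)) heZ
      (hGU mx hmx) (hGV my (by omega)) hGZ (h2 my (by omega))
  -- outer seeds
  set bigP : SubS Λh → Prop := fun S => S = SB ∨ S = SC ∨
      (∃ m, m ≤ n ∧ S = U m) ∨ (∃ m, m ≤ n ∧ S = V m) with hbigP
  set oBs : SubS (SubS Λh) :=
    ⟨{S | S = SB ∨ ∃ m, m ≤ n ∧ S = U m}, ⟨SB, Or.inl rfl⟩⟩ with hoBs
  set oCs : SubS (SubS Λh) :=
    ⟨{S | S = SC ∨ ∃ m, m ≤ n ∧ S = U m}, ⟨SC, Or.inl rfl⟩⟩ with hoCs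
  set oEs : SubS (SubS Λh) := ⟨{S | bigP S}, ⟨SB, Or.inl rfl⟩⟩ with hoEs
  set oAs : ℕ → SubS (SubS Λh) := fun i =>
    ⟨{S | ∃ m, min i n ≤ m ∧ m ≤ n ∧ S = U m}, ⟨U n, ⟨n, min_le_right _ _, le_rfl, rfl⟩⟩⟩
    with hoAs
  set oDs : ℕ → SubS (SubS Λh) := fun i =>
    ⟨{S | S = SB ∨ S = SC ∨ (∃ m, m ≤ n ∧ S = U m) ∨ (∃ m, m < i ∧ S = V m)},
      ⟨SB, Or.inl rfl⟩⟩ with hoDs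
  -- basic properties of big predicate
  have pbig : ∀ S, bigP S → e₀ ∈ S.val ∧ (∃ ec ∈ REedge Ph, S ∈ ec) := by
    intro S hS
    rcases hS with rfl | rfl | ⟨m, hm, rfl⟩ | ⟨m, hm, rfl⟩
    · exact ⟨he₀SB, hGB⟩
    · exact ⟨he₀SC, hGC⟩
    · exact ⟨hDU m hm e₀ (Or.inl rfl), hGU m hm⟩
    · exact ⟨he₀V m hm, hGV m hm⟩
  have pb : ∀ S, (S = SB ∨ ∃ m, m ≤ n ∧ S = U m) → b ∈ S.val ∧ bigP S := by
    intro S hS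
    rcases hS with rfl | ⟨m, hm, rfl⟩
    · exact ⟨hbSB, Or.inl rfl⟩
    · exact ⟨hbU m hm, Or.inr (Or.inr (Or.inl ⟨m, hm, rfl⟩))⟩
  have pc : ∀ S, (S = SC ∨ ∃ m, m ≤ n ∧ S = U m) → c ∈ S.val ∧ bigP S := by
    intro S hS
    rcases hS with rfl | ⟨m, hm, rfl⟩
    · exact ⟨hcSC, Or.inr (Or.inl rfl)⟩
    · exact ⟨hcU m hm, Or.inr (Or.inr (Or.inl ⟨m, hm, rfl⟩))⟩
  have pD : ∀ i, i ≤ n → ∀ S, S ∈ (oDs i).val → bigP S := by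
    intro i hi S hS
    rcases hS with rfl | rfl | ⟨m, hm, rfl⟩ | ⟨m, hm, rfl⟩
    · exact Or.inl rfl
    · exact Or.inr (Or.inl rfl)
    · exact Or.inr (Or.inr (Or.inl ⟨m, hm, rfl⟩))
    · exact Or.inr (Or.inr (Or.inr ⟨m, by omega, rfl⟩))
  -- univNode for the outer seed configurations
  have hUN0 : univNode (RE Ph) ({oBs, oCs, oEs} : Multiset (SubS (SubS Λh))) := by
    apply univNode_triple
    intro x hx y hy z hz
    rcases pb x hx with ⟨hbx, hbpx⟩
    rcases pc y hy with ⟨hcy, hbpy⟩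
    rcases pbig z hz with ⟨hez, hGz⟩
    exact nBC x y z hbx hcy hez (pbig x hbpx).2 (pbig y hbpy).2 hGz
  have hUNi : ∀ i, i ≤ n →
      univNode (RE Ph) ({oAs i, oDs i, oEs} : Multiset (SubS (SubS Λh))) := by
    intro i hi
    apply univNode_triple
    intro x hx y hy z hz
    rcases hx with ⟨mx, hmin, hmx, rfl⟩
    rw [min_eq_left hi] at hmin
    have hGx : ∃ ec ∈ REedge Ph, U mx ∈ ec := hGU mx hmx
    have hbx : b ∈ (U mx).val := hbU mx hmx
    have hcx : c ∈ (U mx).val := hcU mx hmx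
    rcases pbig z hz with ⟨hez, hGz⟩
    rcases hy with rfl | rfl | ⟨m', hm', rfl⟩ | ⟨my, hmy, rfl⟩
    · -- y = SB
      rw [triple_swap12]
      exact nBC y (U mx) z hbSB hcx hez hGB hGx hGz
    · -- y = SC
      exact nBC (U mx) y z hbx hcSC hez hGx hGC hGz
    · -- y = U m'
      exact nBC (U mx) (U m') z hbx (hcU m' hm') hez hGx (hGU m' hm') hGz
    · -- y = V my, my < i
      rcases hz with rfl | rfl | ⟨m'', hm'', rfl⟩ | ⟨mz, hmz, rfl⟩
      · -- z = SB
        rw [triple_rot]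
        exact nBC z (U mx) (V my) hbSB hcx (he₀V my (by omega)) hGB hGx
          (hGV my (by omega))
      · -- z = SC
        rw [triple_swap23]
        exact nBC (U mx) z (V my) hbx hcSC (he₀V my (by omega)) hGx hGC
          (hGV my (by omega))
      · -- z = U m''
        rw [triple_swap23]
        exact nBC (U mx) (U m'') (V my) hbx (hcU m'' hm'') (he₀V my (by omega))
          hGx (hGU m'' hm'') (hGV my (by omega))
      · -- z = V mz
        exact nA mx my (V mz) (by omega) hmx (hGV mz hmz) (heV mz hmz my (by omega))
  -- maximize the outer configurations
  rcases exists_max_node₃ (RE Ph) _ _ _ hUN0 with ⟨Bh, Ch, E0h, hcfg0, hsubBh, hsubCh, hsubE0h⟩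
  have hcfex : ∀ i, ∃ ADE : SubS (SubS Λh) × SubS (SubS Λh) × SubS (SubS Λh), i ≤ n →
      (({ADE.1, ADE.2.1, ADE.2.2} : Multiset (SubS (SubS Λh))) ∈ REbarNode (RE Ph) ∧
        (oAs i).val ⊆ ADE.1.val ∧ (oDs i).val ⊆ ADE.2.1.val ∧ oEs.val ⊆ ADE.2.2.val) := by
    intro i
    by_cases hi : i ≤ n
    · rcases exists_max_node₃ (RE Ph) _ _ _ (hUNi i hi) with ⟨A, D, E, hmem, hA, hD, hE⟩
      exact ⟨(A, D, E), fun _ => ⟨hmem, hA, hD, hE⟩⟩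
    · exact ⟨(Bh, Bh, Bh), fun h => absurd h hi⟩
  choose ADE hADE using hcfex
  set Ah : ℕ → SubS (SubS Λh) := fun i => (ADE i).1 with hAh
  set Dh : ℕ → SubS (SubS Λh) := fun i => (ADE i).2.1 with hDh
  set Eh : ℕ → SubS (SubS Λh) := fun i => (ADE i).2.2 with hEh
  -- membership of the key inner labels in the outer maximized labels
  have mSB_B : SB ∈ Bh.val := hsubBh (Or.inl rfl)
  have mSC_C : SC ∈ Ch.val := hsubCh (Or.inl rfl)
  have mSB_E0 : SB ∈ E0h.val := hsubE0h (Or.inl rfl)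
  have mSC_E0 : SC ∈ E0h.val := hsubE0h (Or.inr (Or.inl rfl))
  have mV_E0 : ∀ m, m ≤ n → V m ∈ E0h.val :=
    fun m hm => hsubE0h (Or.inr (Or.inr (Or.inr ⟨m, hm, rfl⟩)))
  have mU_A : ∀ i, i ≤ n → U i ∈ (Ah i).val :=
    fun i hi => (hADE i hi).2.1 ⟨i, min_le_left _ _, hi, rfl⟩
  have mSB_D : ∀ i, i ≤ n → SB ∈ (Dh i).val :=
    fun i hi => (hADE i hi).2.2.1 (Or.inl rfl)
  have mSC_D : ∀ i, i ≤ n → SC ∈ (Dh i).val :=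
    fun i hi => (hADE i hi).2.2.1 (Or.inr (Or.inl rfl))
  have mV_D : ∀ i, i ≤ n → ∀ m, m < i → V m ∈ (Dh i).val :=
    fun i hi m hm => (hADE i hi).2.2.1 (Or.inr (Or.inr (Or.inr ⟨m, hm, rfl⟩)))
  have mSB_Eh : ∀ i, i ≤ n → SB ∈ (Eh i).val :=
    fun i hi => (hADE i hi).2.2.2 (Or.inl rfl)
  have mSC_Eh : ∀ i, i ≤ n → SC ∈ (Eh i).val :=
    fun i hi => (hADE i hi).2.2.2 (Or.inr (Or.inl rfl))
  have mV_Eh : ∀ i, i ≤ n → ∀ m, m ≤ n → V m ∈ (Eh i).val :=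
    fun i hi m hm => (hADE i hi).2.2.2 (Or.inr (Or.inr (Or.inr ⟨m, hm, rfl⟩)))
  -- occurrences in REbarNode configurations
  have occB : ∃ cfg ∈ REbarNode (RE Ph), Bh ∈ cfg := ⟨_, hcfg0, by simp⟩
  have occC : ∃ cfg ∈ REbarNode (RE Ph), Ch ∈ cfg := ⟨_, hcfg0, by simp⟩
  have occE0 : ∃ cfg ∈ REbarNode (RE Ph), E0h ∈ cfg := ⟨_, hcfg0, by simp⟩
  have occA : ∀ i, i ≤ n → ∃ cfg ∈ REbarNode (RE Ph), Ah i ∈ cfg :=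
    fun i hi => ⟨_, (hADE i hi).1, by simp [hAh, hDh, hEh]⟩
  have occD : ∀ i, i ≤ n → ∃ cfg ∈ REbarNode (RE Ph), Dh i ∈ cfg :=
    fun i hi => ⟨_, (hADE i hi).1, by simp [hAh, hDh, hEh]⟩
  have occEh : ∀ i, i ≤ n → ∃ cfg ∈ REbarNode (RE Ph), Eh i ∈ cfg :=
    fun i hi => ⟨_, (hADE i hi).1, by simp [hAh, hDh, hEh]⟩
  -- every new D-image contains SB and SC and occurs
  have hDboth : ∀ x, DImg E0h Dh Eh (n + 1) x →
      SB ∈ x.val ∧ SC ∈ x.val ∧ ∃ cfg ∈ REbarNode (RE Ph), x ∈ cfg := by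
    intro x hx
    rcases hx with rfl | ⟨i, hi, rfl | rfl⟩
    · exact ⟨mSB_E0, mSC_E0, occE0⟩
    · exact ⟨mSB_D i (by omega), mSC_D i (by omega), occD i (by omega)⟩
    · exact ⟨mSB_Eh i (by omega), mSC_Eh i (by omega), occEh i (by omega)⟩
  have hEdgeCB : ({SC, SB} : Multiset (SubS Λh)) ∈ REedge Ph := by
    rw [pair_comm']; exact hEdgeBC
  -- assemble
  refine ⟨Bh, Ch, E0h, Ah, Dh, Eh, hcfg0, ?_, ?_, ?_, ?_, ?_, ?_, ?_, ?_⟩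
  · intro i hi
    exact (hADE i (by omega)).1
  · exact mem_Qop_edgeC Ph Bh Ch _ _ hcfg0 (by simp) hcfg0 (by simp) SB SC
      mSB_B mSC_C hEdgeBC
  · intro x hx
    rcases hDboth x hx with ⟨-, hSCx, cfg, hcfg, hxcfg⟩
    exact mem_Qop_edgeC Ph Bh x _ _ hcfg0 (by simp) hcfg hxcfg SB SC
      mSB_B hSCx hEdgeBC
  · intro x hx
    rcases hDboth x hx with ⟨hSBx, -, cfg, hcfg, hxcfg⟩
    exact mem_Qop_edgeC Ph Ch x _ _ hcfg0 (by simp) hcfg hxcfg SC SB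
      mSC_C hSBx hEdgeCB
  · intro x y hx hy
    rcases hDboth x hx with ⟨hSBx, -, cfgx, hcfgx, hxcfg⟩
    rcases hDboth y hy with ⟨-, hSCy, cfgy, hcfgy, hycfg⟩
    exact mem_Qop_edgeC Ph x y _ _ hcfgx hxcfg hcfgy hycfg SB SC hSBx hSCy hEdgeBC
  · intro i hi
    have hi' : i ≤ n := by omega
    exact mem_Qop_edgeC Ph (Ah i) E0h _ _ (hADE i hi').1 (by simp [hAh, hDh, hEh])
      hcfg0 (by simp) (U i) (V i) (mU_A i hi') (mV_E0 i hi') (hUe i hi')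
  · intro i m hi hm
    have hi' : i ≤ n := by omega
    have hm' : m ≤ n := by omega
    exact mem_Qop_edgeC Ph (Ah i) (Eh m) _ _ (hADE i hi').1 (by simp [hAh, hDh, hEh])
      (hADE m hm').1 (by simp [hAh, hDh, hEh]) (U i) (V i) (mU_A i hi')
      (mV_Eh m hm' i hi') (hUe i hi')
  · intro i j hij hj
    have hi' : i ≤ n := by omega
    have hj' : j ≤ n := by omega
    exact mem_Qop_edgeC Ph (Ah i) (Dh j) _ _ (hADE i hi').1 (by simp [hAh, hDh, hEh])
      (hADE j hj').1 (by simp [hAh, hDh, hEh]) (U i) (V i) (mU_A i hi')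
      (mV_D j hj' i hij) (hUe i hi')

end StepLemma
/-- if `Ph` is a fixed point (`Q(Ph) →0 Ph`) and a relaxation of
the sinkless-and-sourceless orientation problem, then there are labels
`a, d, e` of `Ph` with `{a,d,e}` in the node constraint and all of
`{d,d}, {d,e}, {e,e}, {a,e}, {a,d}` in the edge constraint (whence `Ph` is
zero-round solvable given a sinkless orientation). -/
theorem no_nontrivial_fixed_point_relaxation_of_SSO
    {Λh : Type} [Fintype Λh] (Ph : NEProblem 3 Λh)
    (hfix : Relaxes (Qop Ph) Ph) (hrel : Relaxes SSO Ph) :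
    ∃ a d e : Λh, ({a, d, e} : Multiset Λh) ∈ Ph.nodeC ∧
      ({d, d} : Multiset Λh) ∈ Ph.edgeC ∧
      ({d, e} : Multiset Λh) ∈ Ph.edgeC ∧
      ({e, e} : Multiset Λh) ∈ Ph.edgeC ∧
      ({a, e} : Multiset Λh) ∈ Ph.edgeC ∧
      ({a, d} : Multiset Λh) ∈ Ph.edgeC := by
  -- Build the invariant for every `n` by induction, using the fixed point.
  have hstep : ∀ n : ℕ, RealS Ph n := by
    intro n
    induction n with
    | zero => exact (base_realS Ph hrel).push hfix
    | succ k ih => exact (step_realS Ph ih).push hfix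
  -- Pigeonhole among the `d`-labels.
  rcases hstep (Fintype.card Λh + 1) with ⟨b, c, e₀, a, d, e, h1, h2, h3, h4, h5, h6, h7, h8, h9⟩
  set N := Fintype.card Λh + 1 with hN
  have hcard : Fintype.card Λh < Fintype.card (Fin N) := by simp [hN]
  obtain ⟨x, y, hxy, hdxy⟩ :=
    Fintype.exists_ne_map_eq_of_card_lt (fun k : Fin N => d k.val) hcard
  -- wlog x < y
  rcases lt_or_gt_of_ne hxy with hlt | hlt
  · refine ⟨a x.val, d x.val, e x.val, h2 x.val x.isLt, ?_, ?_, ?_, ?_, ?_⟩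
    · exact h6 _ _ (Or.inr ⟨x.val, x.isLt, Or.inl rfl⟩) (Or.inr ⟨x.val, x.isLt, Or.inl rfl⟩)
    · exact h6 _ _ (Or.inr ⟨x.val, x.isLt, Or.inl rfl⟩) (Or.inr ⟨x.val, x.isLt, Or.inr rfl⟩)
    · exact h6 _ _ (Or.inr ⟨x.val, x.isLt, Or.inr rfl⟩) (Or.inr ⟨x.val, x.isLt, Or.inr rfl⟩)
    · exact h8 x.val x.val x.isLt x.isLt
    · have := h9 x.val y.val (by exact_mod_cast hlt) y.isLt
      rwa [← hdxy] at this
  · refine ⟨a y.val, d y.val, e y.val, h2 y.val y.isLt, ?_, ?_, ?_, ?_, ?_⟩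
    · exact h6 _ _ (Or.inr ⟨y.val, y.isLt, Or.inl rfl⟩) (Or.inr ⟨y.val, y.isLt, Or.inl rfl⟩)
    · exact h6 _ _ (Or.inr ⟨y.val, y.isLt, Or.inl rfl⟩) (Or.inr ⟨y.val, y.isLt, Or.inr rfl⟩)
    · exact h6 _ _ (Or.inr ⟨y.val, y.isLt, Or.inr rfl⟩) (Or.inr ⟨y.val, y.isLt, Or.inr rfl⟩)
    · exact h8 y.val y.val y.isLt y.isLt
    · have := h9 y.val x.val (by exact_mod_cast hlt) x.isLt
      rwa [hdxy] at this
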